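/- Let G be a graph with n vertices, m edges, energy E, eigenvalues λ₁ ≥ ... ≥ λₙ, and t = min|λᵢ|. Then P := Σ_{i≠j}|λᵢ||λⱼ| satisfies P ≥ E² + nλ₁t − (λ₁ + t)E. -/

import Mathlib

open Matrix Finset

lemma quad_form_le {V : Type*} [Fintype V] [DecidableEq V] [Nonempty V]
    {A : Matrix V V ℝ} (hA : A.IsHermitian) (w : V → ℝ) (hw : w ⬝ᵥ w = 1) :
    w ⬝ᵥ (A *ᵥ w) ≤ ⨆ i, hA.eigenvalues i := by
  classical
  set U : Matrix V V ℝ := (hA.eigenvectorUnitary : Matrix V V ℝ) with hU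
  have hstar : star U = Uᵀ := U.conjTranspose_eq_transpose_of_trivial
  set c : V → ℝ := Uᵀ *ᵥ w with hc
  have hUmem : U ∈ Matrix.unitaryGroup V ℝ := hA.eigenvectorUnitary.2
  have hUU : U * Uᵀ = 1 := by
    rw [← hstar]; exact (Matrix.mem_unitaryGroup_iff).mp hUmem
  have hcc : ∑ i, (c i)^2 = 1 := by
    have : c ⬝ᵥ c = 1 := by
      rw [hc, mulVec_transpose, ← Matrix.dotProduct_mulVec, Matrix.mulVec_vecMul, hUU,
        Matrix.one_mulVec, hw]
    simpa [dotProduct, sq] using this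
  have hD : (diagonal (RCLike.ofReal ∘ hA.eigenvalues) : Matrix V V ℝ)
      = diagonal hA.eigenvalues := by congr 1
  have hform : w ⬝ᵥ (A *ᵥ w) = ∑ i, hA.eigenvalues i * (c i)^2 := by
    conv_lhs => rw [hA.spectral_theorem, Unitary.conjStarAlgAut_apply, hstar]
    rw [← hU, hD, ← Matrix.mulVec_mulVec, ← Matrix.mulVec_mulVec, Matrix.dotProduct_mulVec,
      ← Matrix.mulVec_transpose, ← hc]
    simp only [dotProduct, Matrix.mulVec_diagonal, sq]
    exact Finset.sum_congr rfl fun i _ => by ring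
  have hbdd : BddAbove (Set.range hA.eigenvalues) := Set.Finite.bddAbove (Set.finite_range _)
  calc w ⬝ᵥ (A *ᵥ w) = ∑ i, hA.eigenvalues i * (c i)^2 := hform
    _ ≤ ∑ i, (⨆ k, hA.eigenvalues k) * (c i)^2 := by
        refine Finset.sum_le_sum fun i _ => ?_
        exact mul_le_mul_of_nonneg_right (le_ciSup hbdd i) (sq_nonneg _)
    _ = ⨆ k, hA.eigenvalues k := by rw [← Finset.mul_sum, hcc, mul_one]

lemma abs_eig_le {V : Type*} [Fintype V] [DecidableEq V] [Nonempty V]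
    (G : SimpleGraph V) [DecidableRel G.Adj]
    (hA : (G.adjMatrix ℝ).IsHermitian) (j : V) :
    |hA.eigenvalues j| ≤ ⨆ i, hA.eigenvalues i := by
  classical
  set A := G.adjMatrix ℝ with hAdef
  set v : V → ℝ := ⇑(hA.eigenvectorBasis j) with hv
  have hev : A *ᵥ v = hA.eigenvalues j • v := hA.mulVec_eigenvectorBasis j
  have hnorm : ∑ i, v i * v i = 1 := by
    have h1 : ‖hA.eigenvectorBasis j‖ = 1 := hA.eigenvectorBasis.orthonormal.1 j
    have := real_inner_self_eq_norm_sq (hA.eigenvectorBasis j)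
    rw [h1] at this
    simp only [PiLp.inner_apply, RCLike.inner_apply, conj_trivial] at this
    simpa [hv] using this
  set w : V → ℝ := fun i => |v i| with hw
  have hww : w ⬝ᵥ w = 1 := by
    simpa [dotProduct, hw, abs_mul_abs_self] using hnorm
  have hAnn : ∀ p q, 0 ≤ A p q := fun p q => by
    simp [hAdef, SimpleGraph.adjMatrix_apply]; split <;> norm_num
  have hvAv : v ⬝ᵥ (A *ᵥ v) = hA.eigenvalues j := by
    rw [hev]
    simp only [dotProduct, Pi.smul_apply, smul_eq_mul]
    calc ∑ x, v x * (hA.eigenvalues j * v x) = hA.eigenvalues j * ∑ x, v x * v x := by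
          rw [Finset.mul_sum]; exact Finset.sum_congr rfl fun x _ => by ring
      _ = hA.eigenvalues j := by rw [hnorm, mul_one]
  have hle : |hA.eigenvalues j| ≤ w ⬝ᵥ (A *ᵥ w) := by
    rw [← hvAv]
    calc |v ⬝ᵥ (A *ᵥ v)| ≤ ∑ p, |v p * (A *ᵥ v) p| := Finset.abs_sum_le_sum_abs _ _
      _ ≤ w ⬝ᵥ (A *ᵥ w) := by
          refine Finset.sum_le_sum fun p _ => ?_
          rw [abs_mul]
          simp only [Matrix.mulVec, dotProduct]
          calc |v p| * |∑ q, A p q * v q| ≤ |v p| * ∑ q, |A p q * v q| := by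
                exact mul_le_mul_of_nonneg_left (Finset.abs_sum_le_sum_abs _ _) (abs_nonneg _)
            _ = w p * ∑ q, A p q * w q := by
                congr 1
                refine Finset.sum_congr rfl fun q _ => ?_
                rw [abs_mul, abs_of_nonneg (hAnn p q)]
  exact le_trans hle (quad_form_le hA w hww)

theorem key_intermediate_P_bound {V : Type*} [Fintype V] [DecidableEq V] [Nonempty V]
    (G : SimpleGraph V) [DecidableRel G.Adj]
    (hA : (G.adjMatrix ℝ).IsHermitian) :
    (∑ p ∈ Finset.univ.offDiag, |hA.eigenvalues p.1| * |hA.eigenvalues p.2|) ≥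
      (∑ i, |hA.eigenvalues i|) ^ 2 +
        (Fintype.card V : ℝ) * (⨆ i, hA.eigenvalues i) * (⨅ i, |hA.eigenvalues i|) -
        ((⨆ i, hA.eigenvalues i) + (⨅ i, |hA.eigenvalues i|)) *
          (∑ i, |hA.eigenvalues i|) := by
  classical
  set f : V → ℝ := fun i => |hA.eigenvalues i| with hf
  set l : ℝ := ⨆ i, hA.eigenvalues i with hl
  set t : ℝ := ⨅ i, f i with ht
  have hfle : ∀ i, f i ≤ l := fun i => abs_eig_le G hA i
  have htle : ∀ i, t ≤ f i := fun i =>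
    ciInf_le (Set.Finite.bddBelow (Set.finite_range _)) i
  have hid : ∑ p ∈ Finset.univ.offDiag, f p.1 * f p.2
      = (∑ i, f i)^2 - ∑ i, (f i)^2 := by
    have h1 : (∑ i, f i)^2 = ∑ p ∈ (Finset.univ ×ˢ Finset.univ : Finset (V × V)),
        f p.1 * f p.2 := by
      rw [sq, Finset.sum_mul_sum, ← Finset.sum_product']
    have h2 : (Finset.univ ×ˢ Finset.univ : Finset (V × V))
        = Finset.univ.diag ∪ Finset.univ.offDiag := (Finset.diag_union_offDiag _).symm
    rw [h1, h2, Finset.sum_union (Finset.disjoint_diag_offDiag _), Finset.sum_diag]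
    simp [sq]
  have hkey : ∑ i, (f i)^2 + (Fintype.card V : ℝ) * l * t ≤ (l + t) * ∑ i, f i := by
    have hterm : ∑ i, ((f i)^2 + l * t - (l + t) * f i) ≤ 0 := by
      refine Finset.sum_nonpos fun i _ => ?_
      nlinarith [hfle i, htle i]
    have hsplit : ∑ i, ((f i)^2 + l * t - (l + t) * f i)
        = ∑ i, (f i)^2 + (Fintype.card V : ℝ) * l * t - (l + t) * ∑ i, f i := by
      rw [Finset.sum_sub_distrib, Finset.sum_add_distrib, Finset.sum_const,
        Finset.card_univ, nsmul_eq_mul, ← Finset.mul_sum]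
      ring
    linarith [hsplit ▸ hterm]
  rw [hid]
  linarith
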